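/- If X and Y are topological spaces in finite continuous open correspondence (i.e., there exists an n-to-m correspondence R between X and Y that is both continuous and open), then for every ordinal α, X^α is empty if and only if Y^α is empty. -/

import Mathlib

open Set

/-- The Cantor derivative of a subset `A` of a space, relative to the subspace topology:
points of `A` that do not lie in a finite relatively-open subset of `A`. -/
def sderiv {X : Type*} [TopologicalSpace X] (A : Set X) : Set X :=
  {x | x ∈ A ∧ ∀ U : Set X, IsOpen U → x ∈ U → (U ∩ A).Infinite}

/-- Iterated Cantor derivative of a subset. `cbIter A α` is `A^α`. -/
noncomputable def cbIter {X : Type*} [TopologicalSpace X] (A : Set X) (o : Ordinal) : Set X :=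
  Ordinal.limitRecOn o A (fun _ ih => sderiv ih)
    (fun o _ ih => ⋂ (β : Ordinal), ⋂ (h : β < o), ih β h)

/-- `ρ` is the Cantor-Bendixson rank of `X`. -/
def IsCBRank (X : Type*) [TopologicalSpace X] (ρ : Ordinal) : Prop :=
  cbIter (Set.univ : Set X) ρ = ∅ ∧ ∀ β < ρ, cbIter (Set.univ : Set X) β ≠ ∅

lemma cbIter_zero {X : Type*} [TopologicalSpace X] (A : Set X) :
    cbIter A 0 = A := Ordinal.limitRecOn_zero _ _ _

lemma cbIter_succ {X : Type*} [TopologicalSpace X] (A : Set X) (o : Ordinal) :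
    cbIter A (Order.succ o) = sderiv (cbIter A o) := Ordinal.limitRecOn_succ _ _ _ _

lemma cbIter_limit {X : Type*} [TopologicalSpace X] (A : Set X) {o : Ordinal}
    (h : Order.IsSuccLimit o) : cbIter A o = ⋂ (β : Ordinal), ⋂ (_ : β < o), cbIter A β :=
  Ordinal.limitRecOn_limit _ _ _ _ h

/-- Two spaces in finite continuous open correspondence have, for every ordinal `α`,
`X^α = ∅` iff `Y^α = ∅`. -/
theorem cbIter_empty_iff_of_correspondence {X Y : Type*} [TopologicalSpace X]
    [TopologicalSpace Y] (R : X → Y → Prop) (n m : ℕ) (hn : 0 < n) (hm : 0 < m)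
    (hsurjX : ∀ x, ∃ y, R x y) (hsurjY : ∀ y, ∃ x, R x y)
    (hcont : ∀ O : Set Y, IsOpen O → IsOpen {x | ∃ y ∈ O, R x y})
    (hopen : ∀ O : Set X, IsOpen O → IsOpen {y | ∃ x ∈ O, R x y})
    (hfibY : ∀ y, {x | R x y}.Finite ∧ ({x | R x y}).ncard ≤ n)
    (hfibX : ∀ x, {y | R x y}.Finite ∧ ({y | R x y}).ncard ≤ m) :
    ∀ α : Ordinal, (cbIter (Set.univ : Set X) α = ∅ ↔ cbIter (Set.univ : Set Y) α = ∅) := by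
  have key : ∀ α : Ordinal, ∀ x y, R x y →
      (x ∈ cbIter (Set.univ : Set X) α ↔ y ∈ cbIter (Set.univ : Set Y) α) := by
    intro α
    induction α using Ordinal.limitRecOn with
    | zero =>
      intro x y _
      rw [cbIter_zero, cbIter_zero]
      simp
    | add_one o ih =>
      intro x y hR
      rw [Ordinal.add_one_eq_succ]
      rw [cbIter_succ, cbIter_succ]
      constructor
      · rintro ⟨hxA, hx⟩
        refine ⟨(ih x y hR).mp hxA, ?_⟩
        intro V hV hyV
        by_contra hfin
        rw [Set.not_infinite] at hfin
        have hW : IsOpen {x' | ∃ y' ∈ V, R x' y'} := hcont V hV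
        have hxW : x ∈ {x' | ∃ y' ∈ V, R x' y'} := ⟨y, hyV, hR⟩
        have hinf := hx _ hW hxW
        have hsub : {x' | ∃ y' ∈ V, R x' y'} ∩ cbIter (Set.univ : Set X) o ⊆
            ⋃ y' ∈ V ∩ cbIter (Set.univ : Set Y) o, {x' | R x' y'} := by
          rintro x' ⟨⟨y', hy'V, hR'⟩, hx'A⟩
          exact Set.mem_biUnion ⟨hy'V, (ih x' y' hR').mp hx'A⟩ hR'
        exact hinf (((hfin.biUnion (fun y' _ => (hfibY y').1)).subset hsub))
      · rintro ⟨hyA, hy⟩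
        refine ⟨(ih x y hR).mpr hyA, ?_⟩
        intro U hU hxU
        by_contra hfin
        rw [Set.not_infinite] at hfin
        have hW : IsOpen {y' | ∃ x' ∈ U, R x' y'} := hopen U hU
        have hyW : y ∈ {y' | ∃ x' ∈ U, R x' y'} := ⟨x, hxU, hR⟩
        have hinf := hy _ hW hyW
        have hsub : {y' | ∃ x' ∈ U, R x' y'} ∩ cbIter (Set.univ : Set Y) o ⊆
            ⋃ x' ∈ U ∩ cbIter (Set.univ : Set X) o, {y' | R x' y'} := by
          rintro y' ⟨⟨x', hx'U, hR'⟩, hy'A⟩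
          exact Set.mem_biUnion ⟨hx'U, (ih x' y' hR').mpr hy'A⟩ hR'
        exact hinf (((hfin.biUnion (fun x' _ => (hfibX x').1)).subset hsub))
    | limit o ho ih =>
      intro x y hR
      rw [cbIter_limit _ ho, cbIter_limit _ ho]
      simp only [Set.mem_iInter]
      exact ⟨fun h β hβ => (ih β hβ x y hR).mp (h β hβ),
        fun h β hβ => (ih β hβ x y hR).mpr (h β hβ)⟩
  intro α
  constructor
  · intro h
    rw [Set.eq_empty_iff_forall_notMem] at h ⊢
    intro y hy
    obtain ⟨x, hR⟩ := hsurjY y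
    exact h x ((key α x y hR).mpr hy)
  · intro h
    rw [Set.eq_empty_iff_forall_notMem] at h ⊢
    intro x hx
    obtain ⟨y, hR⟩ := hsurjX x
    exact h y ((key α x y hR).mp hx)
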